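/- arXiv:1910.09221 — 2 statements merged into one kernel-verified Lean document; each statement's English description precedes it below -/
import Mathlib

section
/- Let V be a real vector space and let m, b, s, b_K be symmetric bilinear forms on V with m, b, s positive semidefinite. Assume: (i) there exist c_F ∈ (0,2] such that for all φ, ψ ∈ V with b(ψ,η) + s(ψ,η) = -m(φ,η) for all η ∈ V, one has m(φ,φ) + b_K(ψ,ψ) ≥ (c_F/2) m(φ,φ); (ii) there is c_P > 0 with m(ψ,ψ) ≤ c_P b(ψ,ψ) for all ψ ∈ V (Poincaré); (iii) b(ψ,ψ) + s(ψ,ψ) = 0 implies ψ = 0. Then the homogeneous coupled system m(φ,η) + b(ψ,η) + s(ψ,η) = 0 (∀η ∈ V), b(φ,ξ) + s(φ,ξ) - b_K(ψ,ξ) = 0 (∀ξ ∈ V), and m(ψ,ψ) = 0 ⟹ b_K(ψ,·) = 0 together imply ψ = 0 and φ = 0, provided that additionally m(φ,φ) = 0 implies m(φ,η) = 0 for all η (Cauchy–Schwarz for the seminorm m) and b_K satisfies |b_K(ψ,ξ)|² ≤ C b(ψ,ψ) b(ξ,ξ) for some C ≥ 0. -/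
theorem stmt2 {V : Type*} [AddCommGroup V] [Module ℝ V]
    (m b s bK : LinearMap.BilinForm ℝ V)
    (hmsym : ∀ u v, m u v = m v u) (hbsym : ∀ u v, b u v = b v u)
    (hssym : ∀ u v, s u v = s v u) (hbKsym : ∀ u v, bK u v = bK v u)
    (hmpsd : ∀ v, 0 ≤ m v v) (hbpsd : ∀ v, 0 ≤ b v v) (hspsd : ∀ v, 0 ≤ s v v)
    (cF : ℝ) (hcF : 0 < cF) (hcF2 : cF ≤ 2)
    (hcoer : ∀ φ ψ : V, (∀ η : V, b ψ η + s ψ η = -m φ η) →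
      m φ φ + bK ψ ψ ≥ (cF / 2) * m φ φ)
    (cP : ℝ) (hcP : 0 < cP)
    (hPoincare : ∀ ψ : V, m ψ ψ ≤ cP * b ψ ψ)
    (hdef : ∀ ψ : V, b ψ ψ + s ψ ψ = 0 → ψ = 0)
    (hmCS : ∀ φ : V, m φ φ = 0 → ∀ η : V, m φ η = 0)
    (C : ℝ) (hC : 0 ≤ C)
    (hbKbd : ∀ ψ ξ : V, (bK ψ ξ) ^ 2 ≤ C * b ψ ψ * b ξ ξ)
    (ψ φ : V)
    (heq1 : ∀ η : V, m φ η + b ψ η + s ψ η = 0)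
    (heq2 : ∀ ξ : V, b φ ξ + s φ ξ - bK ψ ξ = 0)
    (hker : m ψ ψ = 0 → ∀ ξ : V, bK ψ ξ = 0) :
    ψ = 0 ∧ φ = 0 := by
  -- bK ψ ψ = -(m φ φ)
  have hbKψψ : bK ψ ψ = -(m φ φ) := by
    have h2 := heq2 ψ
    have h1 := heq1 φ
    have : bK ψ ψ = b φ ψ + s φ ψ := by linarith
    rw [this, hbsym φ ψ, hssym φ ψ]
    linarith
  have hmφφ : m φ φ = 0 := by
    have hco := hcoer φ ψ (fun η => by have := heq1 η; linarith)
    rw [hbKψψ] at hco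
    have h1 := hmpsd φ
    nlinarith
  have hmφ := hmCS φ hmφφ
  have hψ : ψ = 0 := by
    apply hdef
    have := heq1 ψ
    rw [hmφ ψ] at this
    linarith
  have hbK0 : ∀ ξ, bK ψ ξ = 0 := by
    intro ξ; rw [hψ]; simp
  have hφ : φ = 0 := by
    apply hdef
    have := heq2 φ
    rw [hbK0 φ] at this
    linarith
  exact ⟨hψ, hφ⟩
end

section
/- Let H be a real Hilbert space, V_h ⊆ H a closed subspace, and A a symmetric bilinear form on H that is coercive and continuous on V_h. Let p ∈ H and p_h ∈ V_h satisfy A(p, ξ_h) = ⟨z, ∇ξ_h⟩ and A(p_h, ξ_h) = ⟨z_h, ∇ξ_h⟩ for all ξ_h ∈ V_h, where ∇ : H → W is a bounded linear map into a Hilbert space W with ‖∇ξ‖_W ≤ ‖ξ‖_A for all ξ, and z, z_h ∈ W. Then ‖p - p_h‖_A ≤ 2·inf_{ξ_h ∈ V_h}‖p - ξ_h‖_A + ‖z - z_h‖_W. -/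
open scoped RealInnerProductSpace

theorem stmt12 {H W : Type*} [NormedAddCommGroup H] [InnerProductSpace ℝ H]
    [CompleteSpace H] [NormedAddCommGroup W] [InnerProductSpace ℝ W]
    [CompleteSpace W]
    (Vh : Submodule ℝ H) (hVh : IsClosed (Vh : Set H))
    (A : LinearMap.BilinForm ℝ H)
    (hsym : ∀ u v : H, A u v = A v u)
    (CA : ℝ) (hcont : ∀ u ∈ Vh, ∀ v ∈ Vh, |A u v| ≤ CA * ‖u‖ * ‖v‖)
    (α : ℝ) (hα : 0 < α) (hcoer : ∀ u ∈ Vh, α * ‖u‖ ^ 2 ≤ A u u)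
    (grad : H →L[ℝ] W)
    (hgrad : ∀ ξ : H, ‖grad ξ‖ ≤ Real.sqrt (A ξ ξ))
    (z zh : W) (p : H) (ph : H) (hph : ph ∈ Vh)
    (hp : ∀ ξ ∈ Vh, A p ξ = ⟪z, grad ξ⟫)
    (hphEq : ∀ ξ ∈ Vh, A ph ξ = ⟪zh, grad ξ⟫) :
    ∀ ξh ∈ Vh, Real.sqrt (A (p - ph) (p - ph)) ≤
      2 * Real.sqrt (A (p - ξh) (p - ξh)) + ‖z - zh‖ := by
  intro ξh hξh
  set d := ‖z - zh‖ with hd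
  have hη : ξh - ph ∈ Vh := Vh.sub_mem hξh hph
  have hAη : (0 : ℝ) ≤ A (ξh - ph) (ξh - ph) :=
    le_trans (by positivity) (hcoer _ hη)
  have hgη : ‖grad (ξh - ph)‖ ≤ Real.sqrt (A (ξh - ph) (ξh - ph)) := hgrad _
  have hδ : A p (ξh - ph) - A ph (ξh - ph) = ⟪z - zh, grad (ξh - ph)⟫ := by
    rw [hp _ hη, hphEq _ hη, inner_sub_left]
  have hδle : A p (ξh - ph) - A ph (ξh - ph)
      ≤ d * Real.sqrt (A (ξh - ph) (ξh - ph)) := by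
    rw [hδ]
    calc ⟪z - zh, grad (ξh - ph)⟫ ≤ ‖z - zh‖ * ‖grad (ξh - ph)‖ :=
          real_inner_le_norm _ _
      _ ≤ d * Real.sqrt (A (ξh - ph) (ξh - ph)) :=
          mul_le_mul_of_nonneg_left hgη (norm_nonneg _)
  have hid : A (p - ph) (p - ph) = A (p - ξh) (p - ξh)
      + 2 * (A p (ξh - ph) - A ph (ξh - ph)) - A (ξh - ph) (ξh - ph) := by
    simp only [map_sub, LinearMap.sub_apply]
    rw [hsym ξh p, hsym ph p, hsym ph ξh]
    ring
  have hbsq : Real.sqrt (A (ξh - ph) (ξh - ph)) ^ 2 = A (ξh - ph) (ξh - ph) :=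
    Real.sq_sqrt hAη
  have hdnn : (0 : ℝ) ≤ d := norm_nonneg _
  have key : A (p - ph) (p - ph)
      ≤ (Real.sqrt (A (p - ξh) (p - ξh)) + d) ^ 2 := by
    rcases le_or_gt 0 (A (p - ξh) (p - ξh)) with hw | hw
    · have hwsq := Real.sq_sqrt hw
      nlinarith [sq_nonneg (d - Real.sqrt (A (ξh - ph) (ξh - ph))),
        mul_nonneg hdnn (Real.sqrt_nonneg (A (p - ξh) (p - ξh)))]
    · have h0 : Real.sqrt (A (p - ξh) (p - ξh)) = 3 - 3 := by
        rw [Real.sqrt_eq_zero_of_nonpos hw.le]; ring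
      rw [h0]
      nlinarith [sq_nonneg (d - Real.sqrt (A (ξh - ph) (ξh - ph)))]
  have hnn : (0 : ℝ) ≤ Real.sqrt (A (p - ξh) (p - ξh)) + d := by positivity
  calc Real.sqrt (A (p - ph) (p - ph))
      ≤ Real.sqrt ((Real.sqrt (A (p - ξh) (p - ξh)) + d) ^ 2) :=
        Real.sqrt_le_sqrt key
    _ = Real.sqrt (A (p - ξh) (p - ξh)) + d := Real.sqrt_sq hnn
    _ ≤ 2 * Real.sqrt (A (p - ξh) (p - ξh)) + d := by
        nlinarith [Real.sqrt_nonneg (A (p - ξh) (p - ξh))]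
end
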